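/- Single-letter secrecy converse step: for finite random variables M, Z^n = (Z_1,...,Z_n), Y^n = (Y_1,...,Y_n) with memoryless channel p(y^n, z^n | x^n) = Π p(y_i, z_i | x_i) and (M, Y^{i+1..n}, Z^{i-1}, Z_{i+1..n}) → X_i → (Y_i, Z_i) Markov for each i, one has I(M; Y^n | Z^n) ≤ Σ_{i=1}^n I(X_i; Y_i | Z_i). -/

import Mathlib

open scoped Classical BigOperators

set_option maxHeartbeats 2000000
set_option synthInstance.maxHeartbeats 1000000

namespace SecBC

variable {Ω : Type*} [Fintype Ω]

/-- Probability that the random variable `X` takes value `a`, under pmf `p` on `Ω`. -/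
noncomputable def prob (p : Ω → ℝ) {A : Type*} [Fintype A] [DecidableEq A]
    (X : Ω → A) (a : A) : ℝ := ∑ ω, if X ω = a then p ω else 0

/-- Shannon entropy of a random variable. -/
noncomputable def ent (p : Ω → ℝ) {A : Type*} [Fintype A] [DecidableEq A]
    (X : Ω → A) : ℝ := -∑ a, prob p X a * Real.log (prob p X a)

/-- Conditional Shannon entropy `H(X | Y)`. -/
noncomputable def condEnt (p : Ω → ℝ) {A B : Type*} [Fintype A] [DecidableEq A]
    [Fintype B] [DecidableEq B] (X : Ω → A) (Y : Ω → B) : ℝ :=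
  ent p (fun ω => (X ω, Y ω)) - ent p Y

/-- Mutual information `I(X ; Y)`. -/
noncomputable def mutInfo (p : Ω → ℝ) {A B : Type*} [Fintype A] [DecidableEq A]
    [Fintype B] [DecidableEq B] (X : Ω → A) (Y : Ω → B) : ℝ :=
  ent p X + ent p Y - ent p (fun ω => (X ω, Y ω))

/-- Conditional mutual information `I(X ; Y | Z)`. -/
noncomputable def condMutInfo (p : Ω → ℝ) {A B C : Type*} [Fintype A] [DecidableEq A]
    [Fintype B] [DecidableEq B] [Fintype C] [DecidableEq C]
    (X : Ω → A) (Y : Ω → B) (Z : Ω → C) : ℝ :=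
  condEnt p X Z + condEnt p Y Z - condEnt p (fun ω => (X ω, Y ω)) Z

/-- Independence of two random variables. -/
def IndepRV (p : Ω → ℝ) {A B : Type*} [Fintype A] [DecidableEq A]
    [Fintype B] [DecidableEq B] (X : Ω → A) (Y : Ω → B) : Prop :=
  ∀ a b, prob p (fun ω => (X ω, Y ω)) (a, b) = prob p X a * prob p Y b

/-- Markov chain `X → Y → Z`: conditional independence of `X` and `Z` given `Y`. -/
def MarkovChain (p : Ω → ℝ) {A B C : Type*} [Fintype A] [DecidableEq A]
    [Fintype B] [DecidableEq B] [Fintype C] [DecidableEq C]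
    (X : Ω → A) (Y : Ω → B) (Z : Ω → C) : Prop :=
  ∀ a b c, prob p (fun ω => (X ω, Y ω, Z ω)) (a, b, c) * prob p Y b
    = prob p (fun ω => (X ω, Y ω)) (a, b) * prob p (fun ω => (Y ω, Z ω)) (b, c)

/-- `p` is a probability mass function on the finite sample space `Ω`. -/
structure IsPMF (p : Ω → ℝ) : Prop where
  nonneg : ∀ ω, 0 ≤ p ω
  sum_one : ∑ ω, p ω = 1


section Aux

variable {p : Ω → ℝ}

lemma prob_nonneg (hp : ∀ ω, 0 ≤ p ω) {A : Type*} [Fintype A] [DecidableEq A]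
    (T : Ω → A) (a : A) : 0 ≤ prob p T a := by
  refine Finset.sum_nonneg fun ω _ => ?_
  split
  · exact hp ω
  · exact le_rfl

lemma le_prob (hp : ∀ ω, 0 ≤ p ω) {A : Type*} [Fintype A] [DecidableEq A]
    (T : Ω → A) (ω : Ω) : p ω ≤ prob p T (T ω) := by
  have := Finset.single_le_sum (f := fun ω' => if T ω' = T ω then p ω' else 0)
    (fun ω' _ => by split; exacts [hp ω', le_rfl]) (Finset.mem_univ ω)
  simpa [prob] using this

lemma sum_prob {A : Type*} [Fintype A] [DecidableEq A] (T : Ω → A) :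
    ∑ a, prob p T a = ∑ ω, p ω := by
  unfold prob
  rw [Finset.sum_comm]
  refine Finset.sum_congr rfl fun ω _ => ?_
  simp

lemma sum_grouped {A : Type*} [Fintype A] [DecidableEq A] (T : Ω → A) (f : A → ℝ) :
    ∑ ω, p ω * f (T ω) = ∑ a, prob p T a * f a := by
  unfold prob
  simp_rw [Finset.sum_mul, ite_mul, zero_mul]
  rw [Finset.sum_comm]
  refine Finset.sum_congr rfl fun ω _ => ?_
  rw [Finset.sum_ite_eq]
  simp

lemma prob_comp {A B : Type*} [Fintype A] [DecidableEq A] [Fintype B] [DecidableEq B]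
    (T : Ω → A) {f : A → B} (hf : Function.Injective f) (a : A) :
    prob p (fun ω => f (T ω)) (f a) = prob p T a := by
  unfold prob
  refine Finset.sum_congr rfl fun ω _ => ?_
  simp [hf.eq_iff]

lemma prob_comp_nomem {A B : Type*} [Fintype A] [DecidableEq A] [Fintype B] [DecidableEq B]
    (T : Ω → A) {f : A → B} {b : B} (hb : ∀ a, f a ≠ b) :
    prob p (fun ω => f (T ω)) b = 0 := by
  unfold prob
  refine Finset.sum_eq_zero fun ω _ => ?_
  simp [hb (T ω)]

lemma ent_comp {A B : Type*} [Fintype A] [DecidableEq A] [Fintype B] [DecidableEq B]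
    (T : Ω → A) {f : A → B} (hf : Function.Injective f) :
    ent p (fun ω => f (T ω)) = ent p T := by
  unfold ent
  congr 1
  rw [← Finset.sum_subset (Finset.subset_univ (Finset.univ.image f))]
  · rw [Finset.sum_image (fun x _ y _ h => hf h)]
    refine Finset.sum_congr rfl fun a _ => ?_
    rw [prob_comp T hf]
  · intro b _ hb
    have : prob p (fun ω => f (T ω)) b = 0 := by
      refine prob_comp_nomem T fun a h => hb ?_
      exact h ▸ Finset.mem_image_of_mem f (Finset.mem_univ a)
    simp [this]

lemma ent_eq_sum {A : Type*} [Fintype A] [DecidableEq A] (T : Ω → A) :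
    ent p T = -∑ ω, p ω * Real.log (prob p T (T ω)) := by
  unfold ent
  rw [sum_grouped T (fun a => Real.log (prob p T a))]

end Aux

section Aux2

variable {p : Ω → ℝ}
variable {A B C D : Type*} [Fintype A] [DecidableEq A] [Fintype B] [DecidableEq B]
  [Fintype C] [DecidableEq C] [Fintype D] [DecidableEq D]

lemma ent_congr {S : Ω → B} {T : Ω → A} {f : A → B} (hf : Function.Injective f)
    (h : ∀ ω, S ω = f (T ω)) : ent p S = ent p T := by
  have : S = fun ω => f (T ω) := funext h
  rw [this, ent_comp T hf]

lemma prob_congr {S : Ω → B} {T : Ω → A} {f : A → B} (hf : Function.Injective f)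
    (h : ∀ ω, S ω = f (T ω)) (a : A) : prob p S (f a) = prob p T a := by
  have : S = fun ω => f (T ω) := funext h
  rw [this, prob_comp T hf]

lemma marginal (Xv : Ω → A) (Cv : Ω → C) (c : C) :
    ∑ a, prob p (fun ω => (Xv ω, Cv ω)) (a, c) = prob p Cv c := by
  unfold prob
  rw [Finset.sum_comm]
  refine Finset.sum_congr rfl fun ω _ => ?_
  simp only [Prod.mk.injEq]
  by_cases h : Cv ω = c
  · simp [h]
  · simp [h]

lemma cmi_expand (Xv : Ω → A) (Yv : Ω → B) (Zv : Ω → C) :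
    condMutInfo p Xv Yv Zv
      = ent p (fun ω => (Xv ω, Zv ω)) + ent p (fun ω => (Yv ω, Zv ω))
        - ent p (fun ω => ((Xv ω, Yv ω), Zv ω)) - ent p Zv := by
  unfold condMutInfo condEnt
  ring

lemma cmi_eq_sum (Xv : Ω → A) (Yv : Ω → B) (Zv : Ω → C) :
    condMutInfo p Xv Yv Zv
      = ∑ ω, p ω *
          (Real.log (prob p (fun ω' => ((Xv ω', Yv ω'), Zv ω')) ((Xv ω, Yv ω), Zv ω))
           + Real.log (prob p Zv (Zv ω))
           - Real.log (prob p (fun ω' => (Xv ω', Zv ω')) (Xv ω, Zv ω))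
           - Real.log (prob p (fun ω' => (Yv ω', Zv ω')) (Yv ω, Zv ω))) := by
  rw [cmi_expand, ent_eq_sum, ent_eq_sum, ent_eq_sum, ent_eq_sum]
  have h : ∀ f1 f2 f3 f4 : Ω → ℝ,
      (-∑ ω, f1 ω) + (-∑ ω, f2 ω) - (-∑ ω, f3 ω) - (-∑ ω, f4 ω)
        = ∑ ω, (f3 ω + f4 ω - f1 ω - f2 ω) := by
    intro f1 f2 f3 f4
    rw [Finset.sum_sub_distrib, Finset.sum_sub_distrib, Finset.sum_add_distrib]
    ring
  rw [h]
  exact Finset.sum_congr rfl fun ω _ => by ring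

lemma cmi_comm (Xv : Ω → A) (Yv : Ω → B) (Zv : Ω → C) :
    condMutInfo p Xv Yv Zv = condMutInfo p Yv Xv Zv := by
  rw [cmi_expand, cmi_expand]
  have hinj : Function.Injective (fun q : (B × A) × C => ((q.1.2, q.1.1), q.2)) := by
    rintro ⟨⟨b, a⟩, c⟩ ⟨⟨b', a'⟩, c'⟩ h
    simp only [Prod.mk.injEq] at h
    obtain ⟨⟨h1, h2⟩, h3⟩ := h; subst h1; subst h2; subst h3; rfl
  have e : ent p (fun ω => ((Xv ω, Yv ω), Zv ω)) = ent p (fun ω => ((Yv ω, Xv ω), Zv ω)) :=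
    ent_congr hinj (fun ω => rfl)
  rw [e]; ring

lemma cmi_comp_left (Xv : Ω → A) (Yv : Ω → B) (Zv : Ω → C) {f : A → D}
    (hf : Function.Injective f) :
    condMutInfo p (fun ω => f (Xv ω)) Yv Zv = condMutInfo p Xv Yv Zv := by
  rw [cmi_expand, cmi_expand]
  have hinj1 : Function.Injective (fun q : A × C => (f q.1, q.2)) :=
    hf.prodMap Function.injective_id
  have hinj2 : Function.Injective (fun q : (A × B) × C => ((f q.1.1, q.1.2), q.2)) :=
    (hf.prodMap Function.injective_id).prodMap Function.injective_id
  rw [ent_congr (p := p) hinj1 (S := fun ω => (f (Xv ω), Zv ω))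
        (T := fun ω => (Xv ω, Zv ω)) (fun ω => rfl),
      ent_congr (p := p) hinj2 (S := fun ω => ((f (Xv ω), Yv ω), Zv ω))
        (T := fun ω => ((Xv ω, Yv ω), Zv ω)) (fun ω => rfl)]

lemma cmi_comp_mid (Xv : Ω → A) (Yv : Ω → B) (Zv : Ω → C) {f : B → D}
    (hf : Function.Injective f) :
    condMutInfo p Xv (fun ω => f (Yv ω)) Zv = condMutInfo p Xv Yv Zv := by
  rw [cmi_comm, cmi_comp_left _ _ _ hf, cmi_comm]

lemma cmi_comp_cond (Xv : Ω → A) (Yv : Ω → B) (Zv : Ω → C) {f : C → D}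
    (hf : Function.Injective f) :
    condMutInfo p Xv Yv (fun ω => f (Zv ω)) = condMutInfo p Xv Yv Zv := by
  rw [cmi_expand, cmi_expand]
  rw [ent_congr (p := p) (Function.injective_id.prodMap hf)
        (S := fun ω => (Xv ω, f (Zv ω))) (T := fun ω => (Xv ω, Zv ω)) (fun ω => rfl),
      ent_congr (p := p) (Function.injective_id.prodMap hf)
        (S := fun ω => (Yv ω, f (Zv ω))) (T := fun ω => (Yv ω, Zv ω)) (fun ω => rfl),
      ent_congr (p := p) (Function.injective_id.prodMap hf)
        (S := fun ω => ((Xv ω, Yv ω), f (Zv ω)))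
        (T := fun ω => ((Xv ω, Yv ω), Zv ω)) (fun ω => rfl),
      ent_congr (p := p) hf (S := fun ω => f (Zv ω)) (T := Zv) (fun ω => rfl)]

lemma cmi_chain (Xv : Ω → A) (Yv : Ω → B) (Zv : Ω → C) (Dv : Ω → D) :
    condMutInfo p Xv (fun ω => (Yv ω, Zv ω)) Dv
      = condMutInfo p Xv Zv Dv + condMutInfo p Xv Yv (fun ω => (Zv ω, Dv ω)) := by
  rw [cmi_expand, cmi_expand, cmi_expand]
  have hinjA : Function.Injective (fun q : B × C × D => ((q.1, q.2.1), q.2.2)) := by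
    rintro ⟨b, c, d⟩ ⟨b', c', d'⟩ h
    simp only [Prod.mk.injEq] at h
    obtain ⟨⟨h1, h2⟩, h3⟩ := h; subst h1; subst h2; subst h3; rfl
  have hinjB : Function.Injective
      (fun q : A × B × C × D => ((q.1, (q.2.1, q.2.2.1)), q.2.2.2)) := by
    rintro ⟨a, b, c, d⟩ ⟨a', b', c', d'⟩ h
    simp only [Prod.mk.injEq] at h
    obtain ⟨⟨h1, h2, h3⟩, h4⟩ := h; subst h1; subst h2; subst h3; subst h4; rfl
  have hinjC : Function.Injective
      (fun q : A × B × C × D => ((q.1, q.2.1), (q.2.2.1, q.2.2.2))) := by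
    rintro ⟨a, b, c, d⟩ ⟨a', b', c', d'⟩ h
    simp only [Prod.mk.injEq] at h
    obtain ⟨⟨h1, h2⟩, h3, h4⟩ := h; subst h1; subst h2; subst h3; subst h4; rfl
  have hinjD : Function.Injective (fun q : A × C × D => ((q.1, q.2.1), q.2.2)) := by
    rintro ⟨a, c, d⟩ ⟨a', c', d'⟩ h
    simp only [Prod.mk.injEq] at h
    obtain ⟨⟨h1, h2⟩, h3⟩ := h; subst h1; subst h2; subst h3; rfl
  have e1 : ent p (fun ω => ((Yv ω, Zv ω), Dv ω))
      = ent p (fun ω => (Yv ω, (Zv ω, Dv ω))) :=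
    (ent_congr (p := p) hinjA (T := fun ω => (Yv ω, Zv ω, Dv ω)) (fun ω => rfl)).trans
      (ent_congr (p := p) (f := id) Function.injective_id (fun ω => rfl)).symm
  have e2a : ent p (fun ω => ((Xv ω, (Yv ω, Zv ω)), Dv ω))
      = ent p (fun ω => (Xv ω, Yv ω, Zv ω, Dv ω)) :=
    ent_congr (p := p) hinjB (T := fun ω => (Xv ω, Yv ω, Zv ω, Dv ω)) (fun ω => rfl)
  have e2b : ent p (fun ω => ((Xv ω, Yv ω), (Zv ω, Dv ω)))
      = ent p (fun ω => (Xv ω, Yv ω, Zv ω, Dv ω)) :=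
    ent_congr (p := p) hinjC (T := fun ω => (Xv ω, Yv ω, Zv ω, Dv ω)) (fun ω => rfl)
  have e3 : ent p (fun ω => ((Xv ω, Zv ω), Dv ω))
      = ent p (fun ω => (Xv ω, (Zv ω, Dv ω))) :=
    (ent_congr (p := p) hinjD (T := fun ω => (Xv ω, Zv ω, Dv ω)) (fun ω => rfl)).trans
      (ent_congr (p := p) (f := id) Function.injective_id (fun ω => rfl)).symm
  rw [e1, e2a, e3, ← e2b]
  ring

end Aux2

section Aux3

variable {p : Ω → ℝ}
variable {A B C D : Type*} [Fintype A] [DecidableEq A] [Fintype B] [DecidableEq B]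
  [Fintype C] [DecidableEq C] [Fintype D] [DecidableEq D]

lemma cmi_nonneg (hp : IsPMF p) (Xv : Ω → A) (Yv : Ω → B) (Zv : Ω → C) :
    0 ≤ condMutInfo p Xv Yv Zv := by
  set PJ : (A × B) × C → ℝ := prob p (fun ω => ((Xv ω, Yv ω), Zv ω)) with hPJ
  set PA : A × C → ℝ := prob p (fun ω => (Xv ω, Zv ω)) with hPA
  set PB : B × C → ℝ := prob p (fun ω => (Yv ω, Zv ω)) with hPB
  set PC : C → ℝ := prob p Zv with hPC
  rw [← neg_nonpos, cmi_eq_sum]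
  rw [← Finset.sum_neg_distrib]
  have key : ∀ ω, -(p ω * (Real.log (PJ ((Xv ω, Yv ω), Zv ω)) + Real.log (PC (Zv ω))
        - Real.log (PA (Xv ω, Zv ω)) - Real.log (PB (Yv ω, Zv ω))))
      ≤ p ω * (PA (Xv ω, Zv ω) * PB (Yv ω, Zv ω)
          / (PJ ((Xv ω, Yv ω), Zv ω) * PC (Zv ω))) - p ω := by
    intro ω
    rcases eq_or_lt_of_le (hp.nonneg ω) with h0 | h0
    · simp [← h0]
    · have hJ : 0 < PJ ((Xv ω, Yv ω), Zv ω) := lt_of_lt_of_le h0 (le_prob hp.nonneg _ ω)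
      have hA : 0 < PA (Xv ω, Zv ω) := lt_of_lt_of_le h0 (le_prob hp.nonneg _ ω)
      have hB : 0 < PB (Yv ω, Zv ω) := lt_of_lt_of_le h0 (le_prob hp.nonneg _ ω)
      have hC : 0 < PC (Zv ω) := lt_of_lt_of_le h0 (le_prob hp.nonneg _ ω)
      have hratio : 0 < PA (Xv ω, Zv ω) * PB (Yv ω, Zv ω)
          / (PJ ((Xv ω, Yv ω), Zv ω) * PC (Zv ω)) := by positivity
      have hlog := Real.log_le_sub_one_of_pos hratio
      have hlogeq : Real.log (PA (Xv ω, Zv ω) * PB (Yv ω, Zv ω)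
            / (PJ ((Xv ω, Yv ω), Zv ω) * PC (Zv ω)))
          = -(Real.log (PJ ((Xv ω, Yv ω), Zv ω)) + Real.log (PC (Zv ω))
            - Real.log (PA (Xv ω, Zv ω)) - Real.log (PB (Yv ω, Zv ω))) := by
        rw [Real.log_div (by positivity) (by positivity),
            Real.log_mul hA.ne' hB.ne', Real.log_mul hJ.ne' hC.ne']
        ring
      rw [hlogeq] at hlog
      calc -(p ω * (Real.log (PJ ((Xv ω, Yv ω), Zv ω)) + Real.log (PC (Zv ω))
              - Real.log (PA (Xv ω, Zv ω)) - Real.log (PB (Yv ω, Zv ω))))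
          = p ω * (-(Real.log (PJ ((Xv ω, Yv ω), Zv ω)) + Real.log (PC (Zv ω))
              - Real.log (PA (Xv ω, Zv ω)) - Real.log (PB (Yv ω, Zv ω)))) := by ring
        _ ≤ p ω * (PA (Xv ω, Zv ω) * PB (Yv ω, Zv ω)
              / (PJ ((Xv ω, Yv ω), Zv ω) * PC (Zv ω)) - 1) :=
            mul_le_mul_of_nonneg_left hlog (le_of_lt h0)
        _ = p ω * (PA (Xv ω, Zv ω) * PB (Yv ω, Zv ω)
              / (PJ ((Xv ω, Yv ω), Zv ω) * PC (Zv ω))) - p ω := by ring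
  refine le_trans (Finset.sum_le_sum fun ω _ => key ω) ?_
  rw [Finset.sum_sub_distrib, hp.sum_one]
  have hgroup : ∑ ω, p ω * (PA (Xv ω, Zv ω) * PB (Yv ω, Zv ω)
        / (PJ ((Xv ω, Yv ω), Zv ω) * PC (Zv ω)))
      = ∑ q : (A × B) × C, PJ q * (PA (q.1.1, q.2) * PB (q.1.2, q.2) / (PJ q * PC q.2)) := by
    exact sum_grouped (fun ω => ((Xv ω, Yv ω), Zv ω))
      (fun q => PA (q.1.1, q.2) * PB (q.1.2, q.2) / (PJ q * PC q.2))
  rw [hgroup]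
  have hterm : ∀ q : (A × B) × C,
      PJ q * (PA (q.1.1, q.2) * PB (q.1.2, q.2) / (PJ q * PC q.2))
        ≤ PA (q.1.1, q.2) * PB (q.1.2, q.2) / PC q.2 := by
    intro q
    have h0 : (0:ℝ) ≤ PJ q := prob_nonneg hp.nonneg _ q
    rcases eq_or_lt_of_le h0 with h0 | h0
    · rw [← h0, zero_mul]
      have h1 : (0:ℝ) ≤ PA (q.1.1, q.2) := prob_nonneg hp.nonneg _ _
      have h2 : (0:ℝ) ≤ PB (q.1.2, q.2) := prob_nonneg hp.nonneg _ _
      have h3 : (0:ℝ) ≤ PC q.2 := prob_nonneg hp.nonneg _ _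
      positivity
    · rw [mul_div_assoc', mul_div_mul_left _ _ h0.ne']
  refine le_trans (sub_le_sub_right (Finset.sum_le_sum fun q _ => hterm q) 1) ?_
  have hsum2 : ∑ q : (A × B) × C, PA (q.1.1, q.2) * PB (q.1.2, q.2) / PC q.2
      = ∑ c, (∑ a, PA (a, c)) * (∑ b, PB (b, c)) / PC c := by
    rw [Fintype.sum_prod_type, Finset.sum_comm]
    refine Finset.sum_congr rfl fun c _ => ?_
    simp only
    rw [show (∑ x : A × B, PA (x.1, c) * PB (x.2, c) / PC c)
        = ∑ a, ∑ b, PA (a, c) * PB (b, c) / PC c from Fintype.sum_prod_type _]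
    simp_rw [mul_div_assoc, ← Finset.mul_sum]
    rw [← Finset.sum_mul, ← Finset.sum_div, ← mul_div_assoc]
  rw [hsum2]
  have hc : ∀ c, (∑ a, PA (a, c)) * (∑ b, PB (b, c)) / PC c ≤ PC c := by
    intro c
    rw [hPA, hPB, hPC, marginal Xv Zv c, marginal Yv Zv c]
    rcases eq_or_lt_of_le (prob_nonneg hp.nonneg Zv c) with h0 | h0
    · rw [← h0]; simp
    · rw [mul_div_assoc, div_self h0.ne', mul_one]
  refine le_trans (sub_le_sub_right (Finset.sum_le_sum fun c _ => hc c) 1) ?_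
  rw [hPC, sum_prob, hp.sum_one]
  norm_num


lemma cmi_congr_left {Xv : Ω → A} {Yv : Ω → B} {Zv : Ω → C} {S : Ω → D} {f : A → D}
    (hf : Function.Injective f) (h : ∀ ω, S ω = f (Xv ω)) :
    condMutInfo p S Yv Zv = condMutInfo p Xv Yv Zv := by
  have : S = fun ω => f (Xv ω) := funext h
  rw [this, cmi_comp_left Xv Yv Zv hf]

lemma cmi_congr_mid {Xv : Ω → A} {Yv : Ω → B} {Zv : Ω → C} {S : Ω → D} {f : B → D}
    (hf : Function.Injective f) (h : ∀ ω, S ω = f (Yv ω)) :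
    condMutInfo p Xv S Zv = condMutInfo p Xv Yv Zv := by
  have : S = fun ω => f (Yv ω) := funext h
  rw [this, cmi_comp_mid Xv Yv Zv hf]

lemma cmi_congr_cond {Xv : Ω → A} {Yv : Ω → B} {Zv : Ω → C} {S : Ω → D} {f : C → D}
    (hf : Function.Injective f) (h : ∀ ω, S ω = f (Zv ω)) :
    condMutInfo p Xv Yv S = condMutInfo p Xv Yv Zv := by
  have : S = fun ω => f (Zv ω) := funext h
  rw [this, cmi_comp_cond Xv Yv Zv hf]

lemma cmi_markov_zero (hp : IsPMF p) {U : Ω → A} {Xv : Ω → B} {V : Ω → C}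
    (hmk : MarkovChain p U Xv V) : condMutInfo p U V Xv = 0 := by
  rw [cmi_eq_sum]
  refine Finset.sum_eq_zero fun ω _ => ?_
  rcases eq_or_lt_of_le (hp.nonneg ω) with h0 | h0
  · rw [← h0, zero_mul]
  · have hJswap : Function.Injective (fun q : A × B × C => ((q.1, q.2.2), q.2.1)) := by
      rintro ⟨a, b, c⟩ ⟨a', b', c'⟩ h
      simp only [Prod.mk.injEq] at h
      obtain ⟨⟨h1, h2⟩, h3⟩ := h; subst h1; subst h2; subst h3; rfl
    have hBswap : Function.Injective (fun q : B × C => (q.2, q.1)) := by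
      rintro ⟨b, c⟩ ⟨b', c'⟩ h
      simp only [Prod.mk.injEq] at h
      obtain ⟨h1, h2⟩ := h; subst h1; subst h2; rfl
    have eJ : prob p (fun ω' => ((U ω', V ω'), Xv ω')) ((U ω, V ω), Xv ω)
        = prob p (fun ω' => (U ω', Xv ω', V ω')) (U ω, Xv ω, V ω) :=
      prob_congr (p := p) hJswap (T := fun ω' => (U ω', Xv ω', V ω')) (fun ω' => rfl)
        (U ω, Xv ω, V ω)
    have eB : prob p (fun ω' => (V ω', Xv ω')) (V ω, Xv ω)
        = prob p (fun ω' => (Xv ω', V ω')) (Xv ω, V ω) :=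
      prob_congr (p := p) hBswap (T := fun ω' => (Xv ω', V ω')) (fun ω' => rfl)
        (Xv ω, V ω)
    have hprod := hmk (U ω) (Xv ω) (V ω)
    have hJ : 0 < prob p (fun ω' => (U ω', Xv ω', V ω')) (U ω, Xv ω, V ω) :=
      lt_of_lt_of_le h0 (le_prob hp.nonneg _ ω)
    have hX : 0 < prob p Xv (Xv ω) := lt_of_lt_of_le h0 (le_prob hp.nonneg _ ω)
    have hUX : 0 < prob p (fun ω' => (U ω', Xv ω')) (U ω, Xv ω) :=
      lt_of_lt_of_le h0 (le_prob hp.nonneg _ ω)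
    have hXV : 0 < prob p (fun ω' => (Xv ω', V ω')) (Xv ω, V ω) :=
      lt_of_lt_of_le h0 (le_prob hp.nonneg _ ω)
    have hlogs : Real.log (prob p (fun ω' => (U ω', Xv ω', V ω')) (U ω, Xv ω, V ω))
          + Real.log (prob p Xv (Xv ω))
        = Real.log (prob p (fun ω' => (U ω', Xv ω')) (U ω, Xv ω))
          + Real.log (prob p (fun ω' => (Xv ω', V ω')) (Xv ω, V ω)) := by
      rw [← Real.log_mul hJ.ne' hX.ne', ← Real.log_mul hUX.ne' hXV.ne', hprod]
    rw [eJ, eB]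
    rw [show Real.log (prob p (fun ω' => (U ω', Xv ω', V ω')) (U ω, Xv ω, V ω))
          + Real.log (prob p Xv (Xv ω))
          - Real.log (prob p (fun ω' => (U ω', Xv ω')) (U ω, Xv ω))
          - Real.log (prob p (fun ω' => (Xv ω', V ω')) (Xv ω, V ω)) = 0 by
      rw [sub_sub, hlogs]; ring]
    rw [mul_zero]

lemma cmi_const (Xv : Ω → A) {T : Ω → B} {b0 : B} (hT : ∀ ω, T ω = b0) (Zv : Ω → C) :
    condMutInfo p Xv T Zv = 0 := by
  rw [cmi_expand]
  have hbinj : Function.Injective (fun c : C => ((b0, c) : B × C)) := by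
    intro c c' h; simpa using h
  have hacinj : Function.Injective (fun q : A × C => (((q.1, b0), q.2) : (A × B) × C)) := by
    rintro ⟨a, c⟩ ⟨a', c'⟩ h
    simp only [Prod.mk.injEq] at h
    obtain ⟨⟨h1, _⟩, h3⟩ := h; subst h1; subst h3; rfl
  have e1 : ent p (fun ω => (T ω, Zv ω)) = ent p Zv :=
    ent_congr (p := p) hbinj (fun ω => by rw [hT ω])
  have e2 : ent p (fun ω => ((Xv ω, T ω), Zv ω)) = ent p (fun ω => (Xv ω, Zv ω)) :=
    ent_congr (p := p) hacinj (fun ω => by rw [hT ω])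
  rw [e1, e2]
  ring

lemma cmi_cond_pair_le (hp : IsPMF p) (Xv : Ω → A) (Yv : Ω → B) (Cv : Ω → C) (Dv : Ω → D) :
    condMutInfo p Xv Yv (fun ω => (Cv ω, Dv ω))
      ≤ condMutInfo p (fun ω => (Xv ω, Cv ω)) Yv Dv := by
  have h := cmi_chain (p := p) Yv Xv Cv Dv
  rw [cmi_comm (p := p) Yv (fun ω => (Xv ω, Cv ω)) Dv] at h
  rw [cmi_comm (p := p) Yv Xv (fun ω => (Cv ω, Dv ω))] at h
  rw [h]
  have := cmi_nonneg hp Yv Cv Dv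
  linarith

lemma cmi_dpi (hp : IsPMF p) {U : Ω → A} {Xv : Ω → B} {Yv : Ω → C} {Zv : Ω → D}
    (hmk : MarkovChain p U Xv (fun ω => (Yv ω, Zv ω))) :
    condMutInfo p U Yv Zv ≤ condMutInfo p Xv Yv Zv := by
  have h0 : condMutInfo p U (fun ω => (Yv ω, Zv ω)) Xv = 0 := cmi_markov_zero hp hmk
  have hchain1 := cmi_chain (p := p) U Yv Zv Xv
  -- cmi U (Y,Z) X = cmi U Z X + cmi U Y (Z,X)
  have hUYZX : condMutInfo p U Yv (fun ω => (Zv ω, Xv ω)) ≤ 0 := by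
    have hnn := cmi_nonneg hp U Zv Xv
    rw [h0] at hchain1
    linarith
  -- swap conditioning (Z,X) → (X,Z)
  have hswapinj : Function.Injective (fun q : D × B => ((q.2, q.1) : B × D)) := by
    rintro ⟨b, d⟩ ⟨b', d'⟩ h
    simp only [Prod.mk.injEq] at h
    obtain ⟨h1, h2⟩ := h; subst h1; subst h2; rfl
  have hswap : condMutInfo p U Yv (fun ω => (Xv ω, Zv ω))
      = condMutInfo p U Yv (fun ω => (Zv ω, Xv ω)) := by
    exact cmi_congr_cond (p := p) hswapinj (fun ω => rfl)
  -- two chain rule expansions of cmi (U,X) Y Z  (via comm)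
  have hc1 := cmi_chain (p := p) Yv U Xv Zv
  have hc2 := cmi_chain (p := p) Yv Xv U Zv
  -- cmi Y (U,X) Z = cmi Y X Z + cmi Y U (X,Z)
  -- cmi Y (X,U) Z = cmi Y U Z + cmi Y X (U,Z)
  have hUX : condMutInfo p Yv (fun ω => (U ω, Xv ω)) Zv
      = condMutInfo p Yv (fun ω => (Xv ω, U ω)) Zv := by
    have hinj : Function.Injective (fun q : B × A => ((q.2, q.1) : A × B)) := by
      rintro ⟨b, a⟩ ⟨b', a'⟩ h
      simp only [Prod.mk.injEq] at h
      obtain ⟨h1, h2⟩ := h; subst h1; subst h2; rfl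
    exact cmi_congr_mid (p := p) hinj (fun ω => rfl)
  have hnn2 := cmi_nonneg hp Yv Xv (fun ω => (U ω, Zv ω))
  have e1 : condMutInfo p Yv U (fun ω => (Xv ω, Zv ω))
      = condMutInfo p U Yv (fun ω => (Xv ω, Zv ω)) := cmi_comm _ _ _
  have e2 : condMutInfo p Yv U Zv = condMutInfo p U Yv Zv := cmi_comm _ _ _
  have e3 : condMutInfo p Yv Xv Zv = condMutInfo p Xv Yv Zv := cmi_comm _ _ _
  rw [hUX] at hc1
  rw [e1, e3] at hc1
  rw [e2] at hc2
  -- hc1 : cmi Y (X,U) Z = cmi X Y Z + cmi U Y (X,Z)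
  -- hc2 : cmi Y (X,U) Z = cmi U Y Z + cmi Y X (U,Z)
  have := hswap ▸ hUYZX
  linarith

end Aux3
lemma decEq_irrel {T : Type*} (d d' : DecidableEq T) : d = d' := by
  funext a b
  exact Subsingleton.elim _ _

lemma cmi_irrel {p : Ω → ℝ} {A B C : Type*}
    (fA fA' : Fintype A) (dA dA' : DecidableEq A)
    (fB fB' : Fintype B) (dB dB' : DecidableEq B)
    (fC fC' : Fintype C) (dC dC' : DecidableEq C)
    (Xv : Ω → A) (Yv : Ω → B) (Zv : Ω → C) :
    @condMutInfo Ω _ p A B C fA dA fB dB fC dC Xv Yv Zv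
      = @condMutInfo Ω _ p A B C fA' dA' fB' dB' fC' dC' Xv Yv Zv := by
  rw [Subsingleton.elim fA fA', Subsingleton.elim fB fB', Subsingleton.elim fC fC',
      decEq_irrel dA dA', decEq_irrel dB dB', decEq_irrel dC dC']

theorem statement12' {Ω : Type*} [Fintype Ω] {p : Ω → ℝ} (hp : IsPMF p)
    {A 𝒳 𝒴 𝒵 : Type*} [Fintype A] [DecidableEq A] [Fintype 𝒳] [DecidableEq 𝒳]
    [Fintype 𝒴] [DecidableEq 𝒴] [Fintype 𝒵] [DecidableEq 𝒵]
    (n : ℕ) (M : Ω → A) (X : Fin n → Ω → 𝒳) (Y : Fin n → Ω → 𝒴) (Z : Fin n → Ω → 𝒵)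
    (hmarkov : ∀ i : Fin n,
      MarkovChain p
        (fun ω => (M ω, (fun j : {j : Fin n // i < j} => Y j ω),
                   (fun j : {j : Fin n // j < i} => Z j ω),
                   (fun j : {j : Fin n // i < j} => Z j ω)))
        (X i) (fun ω => (Y i ω, Z i ω))) :
    condMutInfo p M (fun ω => fun i => Y i ω) (fun ω => fun i => Z i ω)
      ≤ ∑ i, condMutInfo p (X i) (Y i) (Z i) := by
  have main : ∀ (d k : ℕ), k + d = n →
      condMutInfo p M (fun ω => fun j : {j : Fin n // k ≤ j.val} => Y j ω)
          (fun ω => fun j : Fin n => Z j ω)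
        ≤ ∑ i : Fin n, if k ≤ i.val then condMutInfo p (X i) (Y i) (Z i) else 0 := by
    intro d
    induction d with
    | zero =>
      intro k hk
      have hzero : condMutInfo p M (fun ω => fun j : {j : Fin n // k ≤ j.val} => Y j ω)
          (fun ω => fun j : Fin n => Z j ω) = 0 := by
        refine cmi_const M (b0 := fun j : {j : Fin n // k ≤ j.val} =>
          absurd j.2 (by omega : ¬ k ≤ (j : Fin n).val)) ?_ _
        intro ω
        funext j
        exact absurd j.2 (by omega : ¬ k ≤ (j : Fin n).val)
      rw [hzero]
      refine Finset.sum_nonneg fun i _ => ?_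
      split
      · exact cmi_nonneg hp _ _ _
      · exact le_rfl
    | succ d ih =>
      intro k hk
      have hkn : k < n := by omega
      have hIH := ih (k + 1) (by omega)
      -- Step A: peel off coordinate k
      have ginj : Function.Injective
          (fun h : {j : Fin n // k ≤ j.val} → 𝒴 =>
            ((h ⟨⟨k, hkn⟩, le_refl k⟩ : 𝒴),
             (fun j : {j : Fin n // k + 1 ≤ j.val} => h ⟨j.1, Nat.le_of_succ_le j.2⟩))) := by
        intro h h' e
        simp only [Prod.mk.injEq] at e
        funext j
        rcases eq_or_lt_of_le j.2 with hj | hj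
        · have hj' : j = ⟨⟨k, hkn⟩, le_refl k⟩ := Subtype.ext (Fin.ext hj.symm)
          rw [hj']; exact e.1
        · exact congrFun e.2 ⟨j.1, hj⟩
      have hA : condMutInfo p M (fun ω => fun j : {j : Fin n // k ≤ j.val} => Y j ω)
            (fun ω => fun j : Fin n => Z j ω)
          = condMutInfo p M (fun ω => (Y ⟨k, hkn⟩ ω,
              fun j : {j : Fin n // k + 1 ≤ j.val} => Y j ω))
            (fun ω => fun j : Fin n => Z j ω) :=
        (cmi_congr_mid (p := p) ginj (fun ω => rfl)).symm
      -- Step B: chain rule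
      have hB : condMutInfo p M (fun ω => (Y ⟨k, hkn⟩ ω,
              fun j : {j : Fin n // k + 1 ≤ j.val} => Y j ω))
            (fun ω => fun j : Fin n => Z j ω)
          = condMutInfo p M (fun ω => fun j : {j : Fin n // k + 1 ≤ j.val} => Y j ω)
              (fun ω => fun j : Fin n => Z j ω)
            + condMutInfo p M (Y ⟨k, hkn⟩)
              (fun ω => ((fun j : {j : Fin n // k + 1 ≤ j.val} => Y j ω),
                         (fun j : Fin n => Z j ω))) :=
        cmi_chain M (Y ⟨k, hkn⟩) _ _
      -- Step C1: reorganize the conditioning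
      have finj : Function.Injective
          (fun q : ({j : Fin n // k + 1 ≤ j.val} → 𝒴) × (Fin n → 𝒵) =>
            (((fun j : {j : Fin n // (⟨k, hkn⟩ : Fin n) < j} => q.1 ⟨j.1, j.2⟩),
              (fun j : {j : Fin n // j < (⟨k, hkn⟩ : Fin n)} => q.2 j.1),
              (fun j : {j : Fin n // (⟨k, hkn⟩ : Fin n) < j} => q.2 j.1)),
             q.2 ⟨k, hkn⟩)) := by
        rintro ⟨h, z⟩ ⟨h', z'⟩ e
        simp only [Prod.mk.injEq] at e
        obtain ⟨⟨e1, e2, e3⟩, e4⟩ := e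
        have hz : z = z' := by
          funext l
          rcases lt_trichotomy l.val k with hl | hl | hl
          · exact congrFun e2 ⟨l, hl⟩
          · have : l = ⟨k, hkn⟩ := Fin.ext hl
            rw [this]; exact e4
          · exact congrFun e3 ⟨l, hl⟩
        have hh : h = h' := by
          funext j
          exact congrFun e1 ⟨j.1, j.2⟩
        rw [hz, hh]
      have hC1 : condMutInfo p M (Y ⟨k, hkn⟩)
            (fun ω => ((fun j : {j : Fin n // k + 1 ≤ j.val} => Y j ω),
                       (fun j : Fin n => Z j ω)))
          = condMutInfo p M (Y ⟨k, hkn⟩)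
            (fun ω => (((fun j : {j : Fin n // (⟨k, hkn⟩ : Fin n) < j} => Y j ω),
                        (fun j : {j : Fin n // j < (⟨k, hkn⟩ : Fin n)} => Z j ω),
                        (fun j : {j : Fin n // (⟨k, hkn⟩ : Fin n) < j} => Z j ω)),
                       Z ⟨k, hkn⟩ ω)) :=
        (cmi_congr_cond (p := p) finj (fun ω => rfl)).symm
      -- Step C2: enlarge the first argument
      have hC2 : condMutInfo p M (Y ⟨k, hkn⟩)
            (fun ω => (((fun j : {j : Fin n // (⟨k, hkn⟩ : Fin n) < j} => Y j ω),
                        (fun j : {j : Fin n // j < (⟨k, hkn⟩ : Fin n)} => Z j ω),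
                        (fun j : {j : Fin n // (⟨k, hkn⟩ : Fin n) < j} => Z j ω)),
                       Z ⟨k, hkn⟩ ω))
          ≤ condMutInfo p
              (fun ω => (M ω, (fun j : {j : Fin n // (⟨k, hkn⟩ : Fin n) < j} => Y j ω),
                         (fun j : {j : Fin n // j < (⟨k, hkn⟩ : Fin n)} => Z j ω),
                         (fun j : {j : Fin n // (⟨k, hkn⟩ : Fin n) < j} => Z j ω)))
              (Y ⟨k, hkn⟩) (Z ⟨k, hkn⟩) :=
 by
        have h := cmi_cond_pair_le hp M (Y ⟨k, hkn⟩)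
          (fun ω => ((fun j : {j : Fin n // (⟨k, hkn⟩ : Fin n) < j} => Y j ω),
                     (fun j : {j : Fin n // j < (⟨k, hkn⟩ : Fin n)} => Z j ω),
                     (fun j : {j : Fin n // (⟨k, hkn⟩ : Fin n) < j} => Z j ω)))
          (Z ⟨k, hkn⟩)
        refine le_trans (le_of_eq ?_) (le_trans h (le_of_eq ?_))
        · exact cmi_irrel _ _ _ _ _ _ _ _ _ _ _ _ _ _ _
        · exact cmi_irrel _ _ _ _ _ _ _ _ _ _ _ _ _ _ _
      -- Step C3: data processing via the Markov chain
      have hC3 : condMutInfo p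
              (fun ω => (M ω, (fun j : {j : Fin n // (⟨k, hkn⟩ : Fin n) < j} => Y j ω),
                         (fun j : {j : Fin n // j < (⟨k, hkn⟩ : Fin n)} => Z j ω),
                         (fun j : {j : Fin n // (⟨k, hkn⟩ : Fin n) < j} => Z j ω)))
              (Y ⟨k, hkn⟩) (Z ⟨k, hkn⟩)
          ≤ condMutInfo p (X ⟨k, hkn⟩) (Y ⟨k, hkn⟩) (Z ⟨k, hkn⟩) :=
        cmi_dpi hp (hmarkov ⟨k, hkn⟩)
      -- sum bookkeeping
      have hsplit : ∀ i' : Fin n,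
          (if k ≤ i'.val then condMutInfo p (X i') (Y i') (Z i') else 0)
            = (if i' = ⟨k, hkn⟩ then condMutInfo p (X i') (Y i') (Z i') else 0)
              + (if k + 1 ≤ i'.val then condMutInfo p (X i') (Y i') (Z i') else 0) := by
        intro i'
        by_cases h1 : i' = ⟨k, hkn⟩
        · subst h1
          have h2 : ¬ (k + 1 ≤ k) := by omega
          simp [h2]
        · have h1' : ¬ (i'.val = k) := fun h => h1 (Fin.ext h)
          by_cases h2 : k ≤ i'.val
          · have h3 : k + 1 ≤ i'.val := by omega
            simp [h1, h2, h3]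
          · have h3 : ¬ (k + 1 ≤ i'.val) := by omega
            simp [h1, h2, h3]
      have hsum : (∑ i' : Fin n, if k ≤ i'.val then condMutInfo p (X i') (Y i') (Z i') else 0)
          = condMutInfo p (X ⟨k, hkn⟩) (Y ⟨k, hkn⟩) (Z ⟨k, hkn⟩)
            + ∑ i' : Fin n, if k + 1 ≤ i'.val then condMutInfo p (X i') (Y i') (Z i') else 0 := by
        rw [Finset.sum_congr rfl (fun i' _ => hsplit i'), Finset.sum_add_distrib,
            Finset.sum_ite_eq' Finset.univ (⟨k, hkn⟩ : Fin n)
              (fun i' => condMutInfo p (X i') (Y i') (Z i'))]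
        simp
      rw [hA, hB, hsum]
      linarith
  have h0 := main n 0 (by omega)
  have hrelabel : condMutInfo p M (fun ω => fun j : {j : Fin n // 0 ≤ j.val} => Y j ω)
        (fun ω => fun j : Fin n => Z j ω)
      = condMutInfo p M (fun ω => fun i : Fin n => Y i ω)
        (fun ω => fun j : Fin n => Z j ω) := by
    have hinj : Function.Injective
        (fun h : Fin n → 𝒴 => (fun j : {j : Fin n // 0 ≤ j.val} => h j.1)) := by
      intro h h' e
      funext l
      exact congrFun e ⟨l, Nat.zero_le _⟩
    exact cmi_congr_mid (p := p) hinj (fun ω => rfl)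
  rw [hrelabel] at h0
  refine le_trans h0 ?_
  refine le_of_eq (Finset.sum_congr rfl fun i _ => ?_)
  simp

/-- Single-letterization: for a memoryless broadcast channel
`p(yⁿ,zⁿ|xⁿ) = ∏ᵢ W(yᵢ,zᵢ|xᵢ)` with the Markov chains
`(M, Y_{i+1..n}, Z^{i-1}, Z_{i+1..n}) → Xᵢ → (Yᵢ, Zᵢ)`,
one has `I(M; Yⁿ | Zⁿ) ≤ ∑ᵢ I(Xᵢ; Yᵢ | Zᵢ)`. -/
theorem statement12 {Ω : Type*} [Fintype Ω] {p : Ω → ℝ} (hp : IsPMF p)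
    {A 𝒳 𝒴 𝒵 : Type*} [Fintype A] [DecidableEq A] [Fintype 𝒳] [DecidableEq 𝒳]
    [Fintype 𝒴] [DecidableEq 𝒴] [Fintype 𝒵] [DecidableEq 𝒵]
    (n : ℕ) (M : Ω → A) (X : Fin n → Ω → 𝒳) (Y : Fin n → Ω → 𝒴) (Z : Fin n → Ω → 𝒵)
    (W : 𝒳 → 𝒴 × 𝒵 → ℝ)
    (hW0 : ∀ x yz, 0 ≤ W x yz)
    (hW1 : ∀ x, ∑ yz : 𝒴 × 𝒵, W x yz = 1)
    (hmemoryless : ∀ (m : A) (x : Fin n → 𝒳) (y : Fin n → 𝒴) (z : Fin n → 𝒵),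
      prob p (fun ω => (M ω, (fun i => X i ω), (fun i => Y i ω), (fun i => Z i ω)))
          (m, x, y, z)
        = prob p (fun ω => (M ω, (fun i => X i ω))) (m, x) * ∏ i, W (x i) (y i, z i))
    (hmarkov : ∀ i : Fin n,
      MarkovChain p
        (fun ω => (M ω, (fun j : {j : Fin n // i < j} => Y j ω),
                   (fun j : {j : Fin n // j < i} => Z j ω),
                   (fun j : {j : Fin n // i < j} => Z j ω)))
        (X i) (fun ω => (Y i ω, Z i ω))) :
    condMutInfo p M (fun ω => fun i => Y i ω) (fun ω => fun i => Z i ω)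
      ≤ ∑ i, condMutInfo p (X i) (Y i) (Z i) :=
  statement12' hp n M X Y Z hmarkov

end SecBC
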